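/- arXiv:2504.15579 — 4 statements merged into one kernel-verified Lean document; each statement's English description precedes it below -/
import Mathlib

section
/- Let C be an abelian category and F an additive subfunctor of Ext^1 satisfying the 3×3-lemma property. Then F is closed, i.e., the class of F-deflations is closed under composition. Concretely: if g: B ↠ C and e: E ↠ B are F-deflations, then the composite g ∘ e: E ↠ C is an F-deflation. -/
open CategoryTheory CategoryTheory.Limits CategoryTheory.Abelian

universe w v u

variable {C : Type u} [Category.{v} C] [Abelian C] [HasExt.{w} C]

/-- An additive subfunctor of `Ext¹`, given by a set of extension classes in each
`Ext Z A 1`, which is an additive subgroup stable under pushout (composition with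
`Ext.mk₀ a` on the right) and pullback (composition with `Ext.mk₀ c` on the left). -/
structure IsAddSubfunctor (F : ∀ Z A : C, Set (Ext Z A 1)) : Prop where
  zero_mem : ∀ Z A : C, (0 : Ext Z A 1) ∈ F Z A
  add_mem : ∀ (Z A : C), ∀ δ₁ ∈ F Z A, ∀ δ₂ ∈ F Z A, δ₁ + δ₂ ∈ F Z A
  neg_mem : ∀ (Z A : C), ∀ δ ∈ F Z A, -δ ∈ F Z A
  push : ∀ (Z A A' : C) (a : A ⟶ A'), ∀ δ ∈ F Z A, δ.comp (Ext.mk₀ a) (add_zero 1) ∈ F Z A'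
  pull : ∀ (Z Z' A : C) (c : Z' ⟶ Z), ∀ δ ∈ F Z A, (Ext.mk₀ c).comp δ (zero_add 1) ∈ F Z' A

/-- `f` is an `F`-inflation if it is the mono of a short exact sequence whose
extension class lies in `F`. -/
def IsFInflation (F : ∀ Z A : C, Set (Ext Z A 1)) {A B : C} (f : A ⟶ B) : Prop :=
  ∃ (Z : C) (g : B ⟶ Z) (w : f ≫ g = 0) (hS : (ShortComplex.mk f g w).ShortExact),
    hS.extClass ∈ F Z A

/-- `g` is an `F`-deflation if it is the epi of a short exact sequence whose
extension class lies in `F`. -/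
def IsFDeflation (F : ∀ Z A : C, Set (Ext Z A 1)) {B Z : C} (g : B ⟶ Z) : Prop :=
  ∃ (A : C) (f : A ⟶ B) (w : f ≫ g = 0) (hS : (ShortComplex.mk f g w).ShortExact),
    hS.extClass ∈ F Z A

/-- `F` has the 3×3-lemma property: in any commutative 3×3 diagram of short exact
sequences in which all three columns and the two outer rows are `F`-exact,
the middle row is also `F`-exact. -/
def Has3x3 (F : ∀ Z A : C, Set (Ext Z A 1)) : Prop :=
  ∀ ⦃A B Z D E G H I J : C⦄
    (a : A ⟶ B) (b : B ⟶ Z) (d : D ⟶ E) (e : E ⟶ G) (g : H ⟶ I) (h : I ⟶ J)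
    (i : A ⟶ D) (j : B ⟶ E) (c : Z ⟶ G) (k : D ⟶ H) (l : E ⟶ I) (f : G ⟶ J)
    (w₁ : a ≫ b = 0) (w₂ : d ≫ e = 0) (w₃ : g ≫ h = 0)
    (v₁ : i ≫ k = 0) (v₂ : j ≫ l = 0) (v₃ : c ≫ f = 0)
    (_sq₁ : a ≫ j = i ≫ d) (_sq₂ : b ≫ c = j ≫ e)
    (_sq₃ : d ≫ l = k ≫ g) (_sq₄ : e ≫ f = l ≫ h)
    (h₁ : (ShortComplex.mk a b w₁).ShortExact)
    (h₂ : (ShortComplex.mk d e w₂).ShortExact)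
    (h₃ : (ShortComplex.mk g h w₃).ShortExact)
    (hc₁ : (ShortComplex.mk i k v₁).ShortExact)
    (hc₂ : (ShortComplex.mk j l v₂).ShortExact)
    (hc₃ : (ShortComplex.mk c f v₃).ShortExact),
    h₁.extClass ∈ F Z A → h₃.extClass ∈ F J H →
    hc₁.extClass ∈ F H A → hc₂.extClass ∈ F I B → hc₃.extClass ∈ F J Z →
    h₂.extClass ∈ F G D

section ThreeByThreeAux

set_option linter.unusedSectionVars false

universe w'

namespace ThreeByThree

open CategoryTheory.Category


/-- The image of a morphism of short complexes under a functor. -/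
@[simps]
def mapShortComplexHom {D : Type*} [Category D] [Preadditive D] {S S' : ShortComplex C}
    (φ : S ⟶ S') (G : C ⥤ D) [G.PreservesZeroMorphisms] : S.map G ⟶ S'.map G where
  τ₁ := G.map φ.τ₁
  τ₂ := G.map φ.τ₂
  τ₃ := G.map φ.τ₃
  comm₁₂ := by dsimp [ShortComplex.map]; rw [← G.map_comp, ← G.map_comp, φ.comm₁₂]
  comm₂₃ := by dsimp [ShortComplex.map]; rw [← G.map_comp, ← G.map_comp, φ.comm₂₃]

lemma descShortComplex_naturality {S S' : ShortComplex (CochainComplex C ℤ)} (φ : S ⟶ S') :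
    CochainComplex.mappingCone.map S.f S'.f φ.τ₁ φ.τ₂ φ.comm₁₂.symm ≫
      CochainComplex.mappingCone.descShortComplex S' =
    CochainComplex.mappingCone.descShortComplex S ≫ φ.τ₃ := by
  ext n
  rw [CochainComplex.mappingCone.ext_from_iff _ (n + 1) n rfl]
  constructor
  · simp [CochainComplex.mappingCone.map]
  · simp [CochainComplex.mappingCone.map, ← HomologicalComplex.comp_f, φ.comm₂₃]

lemma triangleOfSESδ_naturality [HasDerivedCategory.{w'} C]
    {S S' : ShortComplex (CochainComplex C ℤ)} (hS : S.ShortExact) (hS' : S'.ShortExact)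
    (φ : S ⟶ S') :
    DerivedCategory.triangleOfSESδ hS ≫ (DerivedCategory.Q.map φ.τ₁)⟦(1 : ℤ)⟧' =
      DerivedCategory.Q.map φ.τ₃ ≫ DerivedCategory.triangleOfSESδ hS' := by
  have h1 := CochainComplex.mappingCone.quasiIso_descShortComplex hS
  have h2 := CochainComplex.mappingCone.quasiIso_descShortComplex hS'
  set m := CochainComplex.mappingCone.map S.f S'.f φ.τ₁ φ.τ₂ φ.comm₁₂.symm with hm
  have hm3 : (CochainComplex.mappingCone.triangle S.f).mor₃ ≫ (φ.τ₁)⟦(1 : ℤ)⟧' =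
      m ≫ (CochainComplex.mappingCone.triangle S'.f).mor₃ :=
    (CochainComplex.mappingCone.triangleMap S.f S'.f φ.τ₁ φ.τ₂ φ.comm₁₂.symm).comm₃
  have hdesc := descShortComplex_naturality φ
  unfold DerivedCategory.triangleOfSESδ
  dsimp only
  rw [← cancel_epi (DerivedCategory.Q.map (CochainComplex.mappingCone.descShortComplex S))]
  have hQ : DerivedCategory.Q.map (CochainComplex.mappingCone.descShortComplex S) ≫
      DerivedCategory.Q.map φ.τ₃ =
      DerivedCategory.Q.map m ≫
        DerivedCategory.Q.map (CochainComplex.mappingCone.descShortComplex S') := by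
    rw [← Functor.map_comp, ← Functor.map_comp, hdesc]
  simp only [assoc, IsIso.hom_inv_id_assoc]
  rw [reassoc_of% hQ]
  simp only [IsIso.hom_inv_id_assoc]
  have hnat := (DerivedCategory.Q.commShiftIso (1 : ℤ)).hom.naturality φ.τ₁
  dsimp at hnat
  have key : DerivedCategory.Q.map (CochainComplex.mappingCone.triangle S.f).mor₃ ≫
      (DerivedCategory.Q.commShiftIso (1 : ℤ)).hom.app S.X₁ ≫
        (DerivedCategory.Q.map φ.τ₁)⟦(1 : ℤ)⟧' =
      DerivedCategory.Q.map m ≫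
        DerivedCategory.Q.map (CochainComplex.mappingCone.triangle S'.f).mor₃ ≫
          (DerivedCategory.Q.commShiftIso (1 : ℤ)).hom.app S'.X₁ := by
    refine (congrArg (DerivedCategory.Q.map (CochainComplex.mappingCone.triangle S.f).mor₃ ≫ ·) hnat.symm).trans ?_
    refine (Functor.map_comp_assoc _ _ _ _).symm.trans ?_
    exact (congrArg (fun t => DerivedCategory.Q.map t ≫ _) hm3).trans (Functor.map_comp_assoc _ _ _ _)
  exact (assoc _ _ _).trans key


lemma singleδ_naturality [HasDerivedCategory.{w'} C] {S S' : ShortComplex C}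
    (hS : S.ShortExact) (hS' : S'.ShortExact) (φ : S ⟶ S') :
    (DerivedCategory.singleFunctor C 0).map φ.τ₃ ≫ hS'.singleδ =
      hS.singleδ ≫ ((DerivedCategory.singleFunctor C 0).map φ.τ₁)⟦(1 : ℤ)⟧' := by
  have hψ := triangleOfSESδ_naturality
    (hS.map_of_exact (HomologicalComplex.single C (ComplexShape.up ℤ) 0))
    (hS'.map_of_exact (HomologicalComplex.single C (ComplexShape.up ℤ) 0))
    (mapShortComplexHom φ (HomologicalComplex.single C (ComplexShape.up ℤ) 0))
  have n3 := ((DerivedCategory.singleFunctorsPostcompQIso C).hom.hom 0).naturality φ.τ₃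
  have n1 := ((DerivedCategory.singleFunctorsPostcompQIso C).inv.hom 0).naturality φ.τ₁
  unfold ShortComplex.ShortExact.singleδ
  dsimp only [SingleFunctors.evaluation, Functor.mapIso_hom, Functor.mapIso_inv]
  dsimp [CochainComplex.singleFunctors] at n3 n1
  simp only [assoc]
  erw [reassoc_of% n3, ← reassoc_of% hψ]
  erw [← Functor.map_comp, n1, Functor.map_comp]
  exact congrArg (_ ≫ ·) (assoc _ _ _).symm


lemma extClass_naturality [HasExt.{w} C] {S S' : ShortComplex C}
    (hS : S.ShortExact) (hS' : S'.ShortExact) (φ : S ⟶ S') :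
    (Ext.mk₀ φ.τ₃).comp hS'.extClass (zero_add 1) =
      hS.extClass.comp (Ext.mk₀ φ.τ₁) (add_zero 1) := by
  letI := HasDerivedCategory.standard C
  apply Ext.ext
  rw [Ext.comp_hom, Ext.comp_hom, Ext.mk₀_hom, Ext.mk₀_hom,
    ShortComplex.ShortExact.extClass_hom, ShortComplex.ShortExact.extClass_hom,
    ShiftedHom.mk₀_comp, ShiftedHom.comp_mk₀]
  simpa using singleδ_naturality hS hS' φ


lemma extClass_eq_zero_of_isZero_X₃ {S : ShortComplex C}
    (hS : S.ShortExact) (h : IsZero S.X₃) : hS.extClass = 0 := by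
  rw [← Ext.mk₀_id_comp hS.extClass, h.eq_of_src (𝟙 S.X₃) 0, Ext.mk₀_zero, Ext.zero_comp]

lemma extClass_eq_zero_of_isZero_X₁ {S : ShortComplex C}
    (hS : S.ShortExact) (h : IsZero S.X₁) : hS.extClass = 0 := by
  rw [← Ext.comp_mk₀_id hS.extClass, h.eq_of_src (𝟙 S.X₁) 0, Ext.mk₀_zero, Ext.comp_zero]

open ZeroObject in
lemma shortExact_id_zero (A : C) :
    (ShortComplex.mk (𝟙 A) (0 : A ⟶ 0) (by simp)).ShortExact where
  exact := by
    rw [ShortComplex.exact_iff_epi _ rfl]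
    exact inferInstanceAs (Epi (𝟙 A))
  mono_f := inferInstanceAs (Mono (𝟙 A))
  epi_g := ⟨fun _ _ _ => (Limits.isZero_zero C).eq_of_src _ _⟩

open ZeroObject in
lemma shortExact_zero_id (Z : C) :
    (ShortComplex.mk (0 : (0 : C) ⟶ Z) (𝟙 Z) (by simp)).ShortExact where
  exact := by
    rw [ShortComplex.exact_iff_mono _ rfl]
    exact inferInstanceAs (Mono (𝟙 Z))
  mono_f := ⟨fun _ _ _ => (Limits.isZero_zero C).eq_of_tgt _ _⟩
  epi_g := inferInstanceAs (Epi (𝟙 Z))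

end ThreeByThree

end ThreeByThreeAux

open ThreeByThree ZeroObject in
/-- If an additive subfunctor `F` of `Ext¹` satisfies the 3×3-lemma property, then
the class of `F`-deflations is closed under composition. -/
theorem three_by_three_implies_deflations_comp
    (F : ∀ Z A : C, Set (Ext Z A 1)) (hF : IsAddSubfunctor F)
    (h33 : Has3x3 F)
    {E B Z : C} (e : E ⟶ B) (g : B ⟶ Z)
    (he : IsFDeflation F e) (hg : IsFDeflation F g) :
    IsFDeflation F (e ≫ g) := by
  obtain ⟨A, f, wf, hSe, hme⟩ := he
  obtain ⟨K, k, wk, hSg, hmg⟩ := hg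
  haveI : Mono f := hSe.mono_f
  haveI : Epi e := hSe.epi_g
  haveI : Mono k := hSg.mono_f
  haveI : Epi g := hSg.epi_g
  haveI : Mono (ShortComplex.mk f e wf).f := hSe.mono_f
  haveI : Mono (ShortComplex.mk k g wk).f := hSg.mono_f
  let p : pullback e k ⟶ E := pullback.fst e k
  let q : pullback e k ⟶ K := pullback.snd e k
  have hpq : p ≫ e = q ≫ k := pullback.condition
  let ℓ : A ⟶ pullback e k := pullback.lift f 0 (by simp [wf])
  have hℓp : ℓ ≫ p = f := pullback.lift_fst _ _ _
  have hℓq : ℓ ≫ q = 0 := pullback.lift_snd _ _ _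
  haveI : Mono ℓ := by
    have : Mono (ℓ ≫ p) := by rw [hℓp]; infer_instance
    exact mono_of_mono ℓ p
  haveI : Mono p := inferInstanceAs (Mono (pullback.fst e k))
  haveI : Epi q := inferInstanceAs (Epi (pullback.snd e k))
  have w2 : p ≫ (e ≫ g) = 0 := by rw [← Category.assoc, hpq, Category.assoc, wk, comp_zero]
  -- the middle row `pullback e k ⟶ E ⟶ Z` is short exact
  have hmid : (ShortComplex.mk p (e ≫ g) w2).ShortExact := by
    refine ⟨ShortComplex.exact_of_f_is_kernel _ (KernelFork.IsLimit.ofι' _ _ ?_)⟩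
    intro T t ht
    have ht' : (t ≫ e) ≫ g = 0 := by rw [Category.assoc, ht]
    refine ⟨pullback.lift t (hSg.exact.lift (t ≫ e) ht')
      (by rw [hSg.exact.lift_f (t ≫ e) ht']), pullback.lift_fst _ _ _⟩
  -- the first column `A ⟶ pullback e k ⟶ K` is short exact
  have hcol1 : (ShortComplex.mk ℓ q hℓq).ShortExact := by
    refine ⟨ShortComplex.exact_of_f_is_kernel _ (KernelFork.IsLimit.ofι' _ _ ?_)⟩
    intro T t ht
    have ht' : (t ≫ p) ≫ e = 0 := by
      rw [Category.assoc, hpq, ← Category.assoc, ht, zero_comp]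
    refine ⟨hSe.exact.lift (t ≫ p) ht', ?_⟩
    apply pullback.hom_ext
    · rw [Category.assoc, hℓp, hSe.exact.lift_f]
    · rw [Category.assoc, hℓq, comp_zero, ht]
  -- the class of the first column is the pullback of the class of `hSe` along `k`
  have hmem1 : hcol1.extClass ∈ F K A := by
    have hnat := extClass_naturality hcol1 hSe
      ⟨𝟙 A, p, k, by rw [Category.id_comp, hℓp], hpq⟩
    dsimp at hnat
    rw [Ext.comp_mk₀_id] at hnat
    rw [← hnat]
    exact hF.pull B K A k hSe.extClass hme
  have hmem := h33 (𝟙 A) (0 : A ⟶ (0 : C)) p (e ≫ g) k g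
      ℓ f (0 : (0 : C) ⟶ Z) q e (𝟙 Z)
      (by simp) w2 wk hℓq wf (by simp)
      (by rw [Category.id_comp, hℓp])
      (by rw [zero_comp, ← Category.assoc, wf, zero_comp])
      hpq
      (by rw [Category.comp_id])
      (shortExact_id_zero A) hmid hSg hcol1 hSe (shortExact_zero_id Z)
      (by rw [extClass_eq_zero_of_isZero_X₃ _ (Limits.isZero_zero C)]; exact hF.zero_mem _ _)
      hmg hmem1 hme
      (by rw [extClass_eq_zero_of_isZero_X₁ _ (Limits.isZero_zero C)]; exact hF.zero_mem _ _)
  exact ⟨pullback e k, p, w2, hmid, hmem⟩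
end

section
/- Let C be an abelian category and F a closed additive subfunctor of Ext^1. Given a commutative 3×3 diagram of short exact sequences in which all three columns are F-exact and both horizontal levels form morphisms of extensions (the top and bottom squares commute compatibly with the extension classes), the middle row is F-exact if and only if both the first and third rows are F-exact. -/
open CategoryTheory CategoryTheory.Limits CategoryTheory.Abelian

universe w v u

variable {C : Type u} [Category.{v} C] [Abelian C] [HasExt.{w} C]

/-- The class of `F`-inflations is closed under composition. -/
def InflationsClosed (F : ∀ Z A : C, Set (Ext Z A 1)) : Prop :=
  ∀ ⦃A B D : C⦄ (f : A ⟶ B) (g : B ⟶ D),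
    IsFInflation F f → IsFInflation F g → IsFInflation F (f ≫ g)

/-- The class of `F`-deflations is closed under composition. -/
def DeflationsClosed (F : ∀ Z A : C, Set (Ext Z A 1)) : Prop :=
  ∀ ⦃E B Z : C⦄ (e : E ⟶ B) (g : B ⟶ Z),
    IsFDeflation F e → IsFDeflation F g → IsFDeflation F (e ≫ g)

universe w2

attribute [local simp] pullback.lift_fst pullback.lift_snd pushout.inl_desc pushout.inr_desc
  pullback.lift_fst_assoc pullback.lift_snd_assoc pushout.inl_desc_assoc pushout.inr_desc_assoc

section Helpers

open CochainComplex.mappingCone in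
lemma map_descShortComplex {S S' : ShortComplex (CochainComplex C ℤ)}
    (hS : S.ShortExact) (hS' : S'.ShortExact)
    (α : S.X₁ ⟶ S'.X₁) (β : S.X₂ ⟶ S'.X₂) (γ : S.X₃ ⟶ S'.X₃)
    (comm₁ : S.f ≫ β = α ≫ S'.f) (comm₂ : S.g ≫ γ = β ≫ S'.g) :
    CochainComplex.mappingCone.map S.f S'.f α β comm₁ ≫ descShortComplex S' =
      descShortComplex S ≫ γ := by
  ext n
  simp [ext_from_iff _ (n+1) n rfl, CochainComplex.mappingCone.map, descShortComplex,
    ]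
  exact (HomologicalComplex.congr_hom comm₂ n).symm

open DerivedCategory in
lemma triangleOfSESδ_naturality [HasDerivedCategory.{w2} C]
    {S S' : ShortComplex (CochainComplex C ℤ)}
    (hS : S.ShortExact) (hS' : S'.ShortExact)
    (α : S.X₁ ⟶ S'.X₁) (β : S.X₂ ⟶ S'.X₂) (γ : S.X₃ ⟶ S'.X₃)
    (comm₁ : S.f ≫ β = α ≫ S'.f) (comm₂ : S.g ≫ γ = β ≫ S'.g) :
    Q.map γ ≫ triangleOfSESδ hS' = triangleOfSESδ hS ≫ (Q.map α)⟦(1:ℤ)⟧' := by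
  have := CochainComplex.mappingCone.quasiIso_descShortComplex hS
  have := CochainComplex.mappingCone.quasiIso_descShortComplex hS'
  set M := CochainComplex.mappingCone.map S.f S'.f α β comm₁ with hM
  have hA : M ≫ CochainComplex.mappingCone.descShortComplex S' =
      CochainComplex.mappingCone.descShortComplex S ≫ γ :=
    map_descShortComplex hS hS' α β γ comm₁ comm₂
  have hB := (CochainComplex.mappingCone.triangleMap S.f S'.f α β comm₁).comm₃
  dsimp [CochainComplex.mappingCone.triangleMap] at hB
  have e1 : Q.map γ ≫ inv (Q.map (CochainComplex.mappingCone.descShortComplex S')) =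
      inv (Q.map (CochainComplex.mappingCone.descShortComplex S)) ≫ Q.map M := by
    rw [IsIso.comp_inv_eq, Category.assoc, IsIso.eq_inv_comp, ← Q.map_comp, ← Q.map_comp, hA]
  have e2 : Q.map M ≫ Q.map (CochainComplex.mappingCone.triangle S'.f).mor₃ =
      Q.map (CochainComplex.mappingCone.triangle S.f).mor₃ ≫
        Q.map ((shiftFunctor (CochainComplex C ℤ) 1).map α) := by
    exact (Q.map_comp _ _).symm.trans ((congrArg Q.map hB).symm.trans (Q.map_comp _ _))
  have e3 := (Q.commShiftIso (1:ℤ)).hom.naturality α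
  dsimp at e3
  dsimp [triangleOfSESδ]
  simp only [← Category.assoc]
  rw [e1]
  simp only [Category.assoc]
  congr 1
  exact ((reassoc_of% e2) _).trans ((Category.assoc _ _ _).trans ((congrArg (_ ≫ ·) e3).trans (Category.assoc _ _ _).symm))

open DerivedCategory in
lemma singleδ_naturality [HasDerivedCategory.{w2} C] {S S' : ShortComplex C}
    (hS : S.ShortExact) (hS' : S'.ShortExact)
    (α : S.X₁ ⟶ S'.X₁) (β : S.X₂ ⟶ S'.X₂) (γ : S.X₃ ⟶ S'.X₃)
    (comm₁ : S.f ≫ β = α ≫ S'.f) (comm₂ : S.g ≫ γ = β ≫ S'.g) :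
    (singleFunctor C 0).map γ ≫ hS'.singleδ =
      hS.singleδ ≫ ((singleFunctor C 0).map α)⟦(1:ℤ)⟧' := by
  set F := HomologicalComplex.single C (ComplexShape.up ℤ) 0 with hF
  have comm₁' : (S.map F).f ≫ F.map β = F.map α ≫ (S'.map F).f := by
    dsimp [ShortComplex.map]; rw [← F.map_comp, ← F.map_comp, comm₁]
  have comm₂' : (S.map F).g ≫ F.map γ = F.map β ≫ (S'.map F).g := by
    dsimp [ShortComplex.map]; rw [← F.map_comp, ← F.map_comp, comm₂]
  have key := triangleOfSESδ_naturality (hS.map_of_exact F) (hS'.map_of_exact F)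
    (F.map α) (F.map β) (F.map γ) comm₁' comm₂'
  unfold ShortComplex.ShortExact.singleδ
  set e := (SingleFunctors.evaluation C (DerivedCategory C) 0).mapIso
    (DerivedCategory.singleFunctorsPostcompQIso C) with he
  have n3 : (DerivedCategory.singleFunctor C 0).map γ ≫ e.hom.app S'.X₃ =
      e.hom.app S.X₃ ≫ Q.map (F.map γ) := e.hom.naturality γ
  have n1 : Q.map (F.map α) ≫ e.inv.app S'.X₁ =
      e.inv.app S.X₁ ≫ (DerivedCategory.singleFunctor C 0).map α := e.inv.naturality α
  have key' := reassoc_of% key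
  refine Eq.trans (Category.assoc _ _ _).symm ?_
  refine Eq.trans (congrArg (· ≫ _) n3) ?_
  refine Eq.trans (Category.assoc _ _ _) ?_
  refine Eq.trans (congrArg (e.hom.app S.X₃ ≫ ·) (key' _)) ?_
  refine Eq.trans (congrArg (fun x => _ ≫ _ ≫ x) ((Functor.map_comp ..).symm.trans
    ((congrArg (shiftFunctor (DerivedCategory C) (1:ℤ)).map n1).trans (Functor.map_comp ..)))) ?_
  exact ((congrArg (_ ≫ ·) (Category.assoc _ _ _)).symm.trans (Category.assoc _ _ _).symm)

variable [HasExt.{w} C]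

open Abelian in
lemma extClass_naturality {S S' : ShortComplex C}
    (hS : S.ShortExact) (hS' : S'.ShortExact)
    (α : S.X₁ ⟶ S'.X₁) (β : S.X₂ ⟶ S'.X₂) (γ : S.X₃ ⟶ S'.X₃)
    (comm₁ : S.f ≫ β = α ≫ S'.f) (comm₂ : S.g ≫ γ = β ≫ S'.g) :
    hS.extClass.comp (Ext.mk₀ α) (add_zero 1) = (Ext.mk₀ γ).comp hS'.extClass (zero_add 1) := by
  letI := HasDerivedCategory.standard C
  ext
  rw [← Ext.hom_comp_singleFunctor_map_shift (C := C), ← Ext.singleFunctor_map_comp_hom (C := C),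
    ShortComplex.ShortExact.extClass_hom, ShortComplex.ShortExact.extClass_hom]
  exact (singleδ_naturality hS hS' α β γ comm₁ comm₂).symm

section Constructions

variable {X Y Z B : C}

/-- Pullback of a short exact sequence along a morphism. -/
lemma pullback_shortExact {u : X ⟶ Y} {v : Y ⟶ Z} {w : u ≫ v = 0}
    (hS : (ShortComplex.mk u v w).ShortExact) (g : B ⟶ Z) :
    (ShortComplex.mk (pullback.lift u 0 (by simp [w]) : X ⟶ pullback v g)
      (pullback.snd v g) (by simp)).ShortExact := by
  haveI := hS.mono_f
  haveI := hS.epi_g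
  haveI : Mono (pullback.lift u 0 (show u ≫ v = (0 : X ⟶ B) ≫ g by simp [w]) :
      X ⟶ pullback v g) := by
    haveI : Mono ((pullback.lift u 0 (show u ≫ v = (0 : X ⟶ B) ≫ g by simp [w]) :
        X ⟶ pullback v g) ≫ pullback.fst v g) := by
      rw [pullback.lift_fst]; exact hS.mono_f
    exact mono_of_mono _ (pullback.fst v g)
  haveI : Epi (pullback.snd v g) := Abelian.epi_pullback_of_epi_f v g
  apply ShortComplex.ShortExact.mk'
  · apply ShortComplex.exact_of_f_is_kernel
    exact KernelFork.IsLimit.ofι' _ _ (fun {T} t ht => by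
      have h0 : (t ≫ pullback.fst v g) ≫ v = 0 := by
        rw [Category.assoc, pullback.condition, ← Category.assoc, ht, zero_comp]
      obtain ⟨l, hl⟩ := KernelFork.IsLimit.lift' hS.fIsKernel _ h0
      dsimp at hl
      refine ⟨l, ?_⟩
      apply pullback.hom_ext
      · simpa using hl
      · simpa using ht.symm)
  · infer_instance
  · infer_instance

end Constructions

section Constructions2

variable {A Y Z' D : C}

/-- Pushout of a short exact sequence along a morphism. -/
lemma pushout_shortExact {u : A ⟶ Y} {v : Y ⟶ Z'} {w : u ≫ v = 0}
    (hS : (ShortComplex.mk u v w).ShortExact) (i : A ⟶ D) :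
    (ShortComplex.mk (pushout.inr u i : D ⟶ pushout u i)
      (pushout.desc v 0 (by simp [w])) (by simp)).ShortExact := by
  haveI := hS.mono_f
  haveI := hS.epi_g
  haveI : Mono (pushout.inr u i) := Abelian.mono_pushout_of_mono_f u i
  haveI : Epi (pushout.desc v 0 (show u ≫ v = i ≫ (0 : D ⟶ Z') by simp [w])) := by
    apply epi_of_epi_fac (show pushout.inl u i ≫ _ = v by simp)
  apply ShortComplex.ShortExact.mk'
  · apply ShortComplex.exact_of_g_is_cokernel
    exact CokernelCofork.IsColimit.ofπ' _ _ (fun {T} t ht => by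
      have h0 : u ≫ pushout.inl u i ≫ t = 0 := by
        rw [pushout.condition_assoc, ht, comp_zero]
      obtain ⟨l, hl⟩ := CokernelCofork.IsColimit.desc' hS.gIsCokernel _ (by simpa using h0)
      dsimp at hl
      refine ⟨l, ?_⟩
      apply pushout.hom_ext
      · simp [hl]
      · simpa using ht.symm)
  · infer_instance
  · infer_instance

end Constructions2

section Fhelpers

variable (F : ∀ Z A : C, Set (Ext Z A 1))

/-- If `f` is an F-inflation, then any short exact sequence with mono `f` has class in `F`. -/
lemma extClass_mem_of_isFInflation (hF : IsAddSubfunctor F)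
    {A B' Z : C} {f : A ⟶ B'} (hf : IsFInflation F f) {g : B' ⟶ Z} {w : f ≫ g = 0}
    (hS : (ShortComplex.mk f g w).ShortExact) : hS.extClass ∈ F Z A := by
  obtain ⟨Z₀, g₀, w₀, hS₀, mem⟩ := hf
  let ψ : Z₀ ≅ Z := IsColimit.coconePointUniqueUpToIso hS₀.gIsCokernel hS.gIsCokernel
  have hcomm : g₀ ≫ ψ.hom = g :=
    IsColimit.comp_coconePointUniqueUpToIso_hom hS₀.gIsCokernel hS.gIsCokernel
      WalkingParallelPair.one
  have hnat := extClass_naturality hS₀ hS (𝟙 A) (𝟙 B') ψ.hom (by simp)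
    (by simpa using hcomm)
  rw [Ext.comp_mk₀_id] at hnat
  have : hS.extClass = (Ext.mk₀ ψ.inv).comp hS₀.extClass (zero_add 1) := by
    rw [hnat, Ext.mk₀_comp_mk₀_assoc, ψ.inv_hom_id, Ext.mk₀_id_comp]
  rw [this]
  exact hF.pull _ _ _ _ _ mem
end Fhelpers


end Helpers


section LemmaP

lemma reflect_push (F : ∀ Z A : C, Set (Ext Z A 1)) (hF : IsAddSubfunctor F)
    (hclosed : InflationsClosed F)
    {A D H Y Z' : C} {i : A ⟶ D} {k : D ⟶ H} {wik : i ≫ k = 0}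
    (hik : (ShortComplex.mk i k wik).ShortExact) (hε : hik.extClass ∈ F H A)
    {u : A ⟶ Y} {v : Y ⟶ Z'} {wuv : u ≫ v = 0}
    (huv : (ShortComplex.mk u v wuv).ShortExact)
    (hδi : huv.extClass.comp (Ext.mk₀ i) (add_zero 1) ∈ F Z' D) :
    huv.extClass ∈ F Z' A := by
  have hQ := pushout_shortExact huv i
  have hnat := extClass_naturality huv hQ i (pushout.inl u i) (𝟙 Z')
      pushout.condition (by simp)
  rw [Ext.mk₀_id_comp] at hnat
  have hinf1 : IsFInflation F i := ⟨H, k, wik, hik, hε⟩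
  have hinf2 : IsFInflation F (pushout.inr u i) := ⟨Z', _, _, hQ, hnat ▸ hδi⟩
  obtain ⟨Z₃, g₃, w₃, hS₃, mem₃⟩ := hclosed i (pushout.inr u i) hinf1 hinf2
  have hfac : u ≫ pushout.inl u i ≫ g₃ = 0 := by
    rw [pushout.condition_assoc, ← Category.assoc, w₃]
  obtain ⟨t, ht⟩ := CokernelCofork.IsColimit.desc' huv.gIsCokernel
      (pushout.inl u i ≫ g₃) hfac
  have hnat2 := extClass_naturality huv hS₃ (𝟙 A) (pushout.inl u i) t
      (by simpa using pushout.condition) (by simpa using ht)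
  rw [Ext.comp_mk₀_id] at hnat2
  rw [hnat2]
  exact hF.pull _ _ _ _ _ mem₃

end LemmaP


section LemmaP'

lemma reflect_pull (F : ∀ Z A : C, Set (Ext Z A 1)) (hF : IsAddSubfunctor F)
    (hclosed : InflationsClosed F)
    {N B Z X Y : C} {n : N ⟶ B} {g : B ⟶ Z} {wng : n ≫ g = 0}
    (hng : (ShortComplex.mk n g wng).ShortExact) (hν : hng.extClass ∈ F Z N)
    {u : X ⟶ Y} {v : Y ⟶ Z} {wuv : u ≫ v = 0}
    (huv : (ShortComplex.mk u v wuv).ShortExact)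
    (hpull : (Ext.mk₀ g).comp huv.extClass (zero_add 1) ∈ F B X) :
    huv.extClass ∈ F Z X := by
  -- the pullback W = Y ×_Z B, and the sequence X → W → B realizing the pull of the class
  have hW := pullback_shortExact huv g
  have hnat1 := extClass_naturality hW huv (𝟙 X) (pullback.fst v g) g
      (by simp) pullback.condition.symm
  rw [Ext.comp_mk₀_id] at hnat1
  have hinf1 : IsFInflation F (pullback.lift u 0 (show u ≫ v = (0 : X ⟶ B) ≫ g by simp [wuv]) :
      X ⟶ pullback v g) := ⟨B, _, _, hW, hnat1 ▸ hpull⟩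
  -- the bicartesian sequence W → Y ⊞ B → Z
  haveI := hng.epi_g
  haveI := huv.epi_g
  have wbc : Abelian.PullbackToBiproductIsKernel.pullbackToBiproduct v g ≫
      biprod.desc v (-g) = 0 := by
    rw [biprod.lift_desc, Preadditive.comp_neg, pullback.condition, add_neg_cancel]
  haveI : Mono (Abelian.PullbackToBiproductIsKernel.pullbackToBiproduct v g) := by
    apply Preadditive.mono_of_cancel_zero
    intro T t ht
    apply pullback.hom_ext
    · simpa using ht =≫ biprod.fst
    · simpa using ht =≫ biprod.snd
  haveI : Epi (biprod.desc v (-g)) := epi_of_epi_fac (biprod.inl_desc v (-g))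
  have hbc : (ShortComplex.mk _ _ wbc).ShortExact :=
    ShortComplex.ShortExact.mk'
      (ShortComplex.exact_of_f_is_kernel _
        (Abelian.PullbackToBiproductIsKernel.isLimitPullbackToBiproduct v g))
      inferInstance inferInstance
  -- its class is the push of the class of (n, g) along z = lift 0 (-n)
  have hz : (0 : N ⟶ Y) ≫ v = (-n) ≫ g := by simp [wng]
  have hnat2 := extClass_naturality hng hbc (pullback.lift 0 (-n) hz) (-biprod.inr) (𝟙 Z)
      (by apply biprod.hom_ext <;> simp) (by simp)
  rw [Ext.mk₀_id_comp] at hnat2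
  have hinf2 : IsFInflation F (Abelian.PullbackToBiproductIsKernel.pullbackToBiproduct v g) :=
    ⟨Z, _, _, hbc, hnat2 ▸ hF.push _ _ _ _ _ hν⟩
  -- compose the two F-inflations
  obtain ⟨Z₃, g₃, w₃, hS₃, mem₃⟩ := hclosed _ _ hinf1 hinf2
  have hcompeq : (pullback.lift u 0 (show u ≫ v = (0 : X ⟶ B) ≫ g by simp [wuv]) :
      X ⟶ pullback v g) ≫ Abelian.PullbackToBiproductIsKernel.pullbackToBiproduct v g =
      u ≫ biprod.inl := by
    apply biprod.hom_ext <;> simp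
  have hfac : u ≫ biprod.inl ≫ g₃ = 0 := by
    rw [← Category.assoc, ← hcompeq, Category.assoc, ← Category.assoc, w₃]
  obtain ⟨t, ht⟩ := CokernelCofork.IsColimit.desc' huv.gIsCokernel (biprod.inl ≫ g₃) hfac
  have hnat3 := extClass_naturality huv hS₃ (𝟙 X) biprod.inl t
      (by simpa using hcompeq.symm) (by simpa using ht)
  rw [Ext.comp_mk₀_id] at hnat3
  rw [hnat3]
  exact hF.pull _ _ _ _ _ mem₃

end LemmaP'

/-- For a closed additive subfunctor `F`, in a commutative 3×3 diagram of short
exact sequences whose three columns are `F`-exact, the middle row is `F`-exact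
if and only if the first and third rows are. -/
theorem middle_row_F_exact_iff_outer_rows
    (F : ∀ Z A : C, Set (Ext Z A 1)) (hF : IsAddSubfunctor F)
    (hclosed : InflationsClosed F)
    {A B Z D E G H I J : C}
    (a : A ⟶ B) (b : B ⟶ Z) (d : D ⟶ E) (e : E ⟶ G) (g : H ⟶ I) (h : I ⟶ J)
    (i : A ⟶ D) (j : B ⟶ E) (c : Z ⟶ G) (k : D ⟶ H) (l : E ⟶ I) (f : G ⟶ J)
    (w₁ : a ≫ b = 0) (w₂ : d ≫ e = 0) (w₃ : g ≫ h = 0)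
    (v₁ : i ≫ k = 0) (v₂ : j ≫ l = 0) (v₃ : c ≫ f = 0)
    (sq₁ : a ≫ j = i ≫ d) (sq₂ : b ≫ c = j ≫ e)
    (sq₃ : d ≫ l = k ≫ g) (sq₄ : e ≫ f = l ≫ h)
    (h₁ : (ShortComplex.mk a b w₁).ShortExact)
    (h₂ : (ShortComplex.mk d e w₂).ShortExact)
    (h₃ : (ShortComplex.mk g h w₃).ShortExact)
    (hc₁ : (ShortComplex.mk i k v₁).ShortExact)
    (hc₂ : (ShortComplex.mk j l v₂).ShortExact)
    (hc₃ : (ShortComplex.mk c f v₃).ShortExact)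
    (mc₁ : hc₁.extClass ∈ F H A) (mc₂ : hc₂.extClass ∈ F I B)
    (mc₃ : hc₃.extClass ∈ F J Z) :
    h₂.extClass ∈ F G D ↔ (h₁.extClass ∈ F Z A ∧ h₃.extClass ∈ F J H) := by
  constructor
  · intro hδ₂
    have hR := extClass_naturality h₁ h₂ i j c sq₁ sq₂
    have hR' := extClass_naturality h₂ h₃ k l f sq₃ sq₄
    constructor
    · exact reflect_push F hF hclosed hc₁ mc₁ h₁
        (by rw [hR]; exact hF.pull _ _ _ _ _ hδ₂)
    · exact reflect_pull F hF hclosed hc₃ mc₃ h₃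
        (by rw [← hR']; exact hF.push _ _ _ _ _ hδ₂)
  · rintro ⟨hδ₁, hδ₃⟩
    -- the pullback V = I ×_J G, with the short exact sequence H → V → G
    have hV := pullback_shortExact h₃ f
    have hnatV := extClass_naturality hV h₃ (𝟙 H) (pullback.fst h f) f
        (by simp) pullback.condition.symm
    rw [Ext.comp_mk₀_id] at hnatV
    have memV : hV.extClass ∈ F G H := hnatV ▸ hF.pull _ _ _ _ _ hδ₃
    -- the induced morphism θ : E ⟶ V and the short exact sequence A → E → V
    have wθ : l ≫ h = e ≫ f := sq₄.symm
    set θ : E ⟶ pullback h f := pullback.lift l e wθ with hθ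
    have wς : (a ≫ j) ≫ θ = 0 := by
      apply pullback.hom_ext
      · simp [hθ, v₂]
      · simp [hθ, ← sq₂, reassoc_of% w₁]
    haveI := h₁.mono_f
    haveI := hc₂.mono_f
    haveI := hc₃.mono_f
    haveI := h₂.epi_g
    haveI := hc₁.epi_g
    haveI : Mono (a ≫ j) := mono_comp a j
    have hkm : k ≫ (pullback.lift g 0 (show g ≫ h = (0 : H ⟶ G) ≫ f by simp [w₃]) :
        H ⟶ pullback h f) = d ≫ θ := by
      apply pullback.hom_ext
      · simp [hθ, sq₃]
      · simp [hθ, w₂]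
    haveI : Epi θ := by
      apply Preadditive.epi_of_cancel_zero
      intro T c₀ hc₀
      have h1 : (pullback.lift g 0 (show g ≫ h = (0 : H ⟶ G) ≫ f by simp [w₃]) :
          H ⟶ pullback h f) ≫ c₀ = 0 := by
        have h2 := hkm =≫ c₀
        rw [Category.assoc, Category.assoc, hc₀, comp_zero] at h2
        exact (cancel_epi k).1 (by simpa using h2)
      obtain ⟨c₁, hc₁'⟩ := CokernelCofork.IsColimit.desc' hV.gIsCokernel c₀ h1
      dsimp at hc₁'
      have h3 : e ≫ c₁ = 0 := by
        have h4 : θ ≫ pullback.snd h f ≫ c₁ = 0 := by rw [hc₁', hc₀]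
        simpa [hθ] using h4
      have h5 : c₁ = 0 := (cancel_epi e).1 (by simpa using h3)
      rw [← hc₁', h5, comp_zero]
    have hς : (ShortComplex.mk (a ≫ j) θ wς).ShortExact := by
      apply ShortComplex.ShortExact.mk'
      · apply ShortComplex.exact_of_f_is_kernel
        apply KernelFork.IsLimit.ofι'
        intro T t ht
        have htl : t ≫ l = 0 := by
          have h6 := ht =≫ pullback.fst h f
          simpa [hθ] using h6
        obtain ⟨t₁, ht₁⟩ := KernelFork.IsLimit.lift' hc₂.fIsKernel t (by simpa using htl)
        dsimp at ht₁
        have hte : t ≫ e = 0 := by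
          have h7 := ht =≫ pullback.snd h f
          simpa [hθ] using h7
        have htb : t₁ ≫ b = 0 := by
          rw [← cancel_mono c, Category.assoc, sq₂, zero_comp, ← Category.assoc, ht₁, hte]
        obtain ⟨t₂, ht₂⟩ := KernelFork.IsLimit.lift' h₁.fIsKernel t₁ (by simpa using htb)
        dsimp at ht₂
        exact ⟨t₂, by rw [← Category.assoc, ht₂, ht₁]⟩
      · infer_instance
      · infer_instance
    have memς := extClass_mem_of_isFInflation F hF
        (hclosed a j ⟨Z, b, w₁, h₁, hδ₁⟩ ⟨I, l, v₂, hc₂, mc₂⟩) hς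
    have hnatς := extClass_naturality hς h₂ i (𝟙 E) (pullback.snd h f)
        (by simpa using sq₁) (by simp [hθ])
    exact reflect_pull F hF hclosed hV memV h₂
      (by rw [← hnatς]; exact hF.push _ _ _ _ _ memς)
end

section
/- Let C be an abelian category, and let E₁: 0 → A₁ → B₁ → C → 0 and E₂: 0 → A₂ → B₂ → C → 0 be two short exact sequences with the same cokernel C and classes δ₁, δ₂ ∈ Ext^1. Let M = B₁ ×_C B₂ be the pullback. Then there is a commutative 3×3 diagram with middle object M in which the middle row 0 → A₁ → M → B₂ → 0 realizes the pullback class δ₁·y₂ (where y₂: B₂ → C), the middle column 0 → A₂ → M → B₁ → 0 realizes δ₂·y₁, and the inclusions m₁: A₁ → M, m₂: A₂ → M satisfy m₁·δ₁ + m₂·δ₂ = 0 in Ext^1(C, M). -/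
open CategoryTheory CategoryTheory.Limits CategoryTheory.Abelian

universe w' w v u

variable {C : Type u} [Category.{v} C] [Abelian C] [HasExt.{w} C]

section NPAux

set_option linter.unusedSectionVars false

open CochainComplex DerivedCategory

lemma map_descShortComplex_s9 {S₁ S₂ : ShortComplex (CochainComplex C ℤ)} (φ : S₁ ⟶ S₂) :
    mappingCone.map S₁.f S₂.f φ.τ₁ φ.τ₂ φ.comm₁₂.symm ≫
        mappingCone.descShortComplex S₂ =
      mappingCone.descShortComplex S₁ ≫ φ.τ₃ := by
  ext n
  simp [mappingCone.ext_from_iff _ (n+1) n rfl, mappingCone.map,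
    mappingCone.descShortComplex]
  simp only [← HomologicalComplex.comp_f, φ.comm₂₃]

lemma triangleOfSESδ_naturality_s9 [HasDerivedCategory.{w'} C]
    {S₁ S₂ : ShortComplex (CochainComplex C ℤ)} (φ : S₁ ⟶ S₂)
    (h₁ : S₁.ShortExact) (h₂ : S₂.ShortExact) :
    Q.map φ.τ₃ ≫ triangleOfSESδ h₂ =
      triangleOfSESδ h₁ ≫ (Q.map φ.τ₁)⟦(1 : ℤ)⟧' := by
  exact (DerivedCategory.triangleOfSESδ_naturality h₁ h₂ φ).symm

open ShortComplex in
lemma singleδ_naturality_s9 [HasDerivedCategory.{w'} C]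
    {S₁ S₂ : ShortComplex C} (φ : S₁ ⟶ S₂)
    (h₁ : S₁.ShortExact) (h₂ : S₂.ShortExact) :
    (DerivedCategory.singleFunctor C 0).map φ.τ₃ ≫ h₂.singleδ =
      h₁.singleδ ≫ ((DerivedCategory.singleFunctor C 0).map φ.τ₁)⟦(1 : ℤ)⟧' := by
  exact (ShortComplex.ShortExact.singleTriangle.map h₁ h₂ φ).comm₃.symm

variable [HasExt.{w} C]

lemma extClass_naturality_s9 {S₁ S₂ : ShortComplex C} (φ : S₁ ⟶ S₂)
    (h₁ : S₁.ShortExact) (h₂ : S₂.ShortExact) :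
    (Ext.mk₀ φ.τ₃).comp h₂.extClass (zero_add 1) =
      h₁.extClass.comp (Ext.mk₀ φ.τ₁) (add_zero 1) := by
  letI := HasDerivedCategory.standard C
  apply Ext.ext
  rw [← Ext.singleFunctor_map_comp_hom, ← Ext.hom_comp_singleFunctor_map_shift,
    h₁.extClass_hom, h₂.extClass_hom]
  exact singleδ_naturality_s9 φ h₁ h₂

lemma mk₀_neg {X Y : C} (f : X ⟶ Y) : Ext.mk₀ (-f) = -Ext.mk₀ f := by
  letI := HasDerivedCategory.standard C
  apply Ext.ext
  rw [Ext.mk₀_hom, Ext.neg_hom, Ext.mk₀_hom, Functor.map_neg]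
  simp [ShiftedHom.mk₀]

end NPAux

/-- Nakaoka–Palu's Proposition 3.15 in an abelian category: given two short exact
sequences over a common cokernel `Z`, the pullback `M = B₁ ×_Z B₂` fits in a
commutative 3×3 diagram, whose middle row realizes `δ₁ · y₂`, whose middle column
realizes `δ₂ · y₁`, and `m₁ · δ₁ + m₂ · δ₂ = 0`. -/
theorem pullback_three_by_three
    {A₁ B₁ Z A₂ B₂ : C}
    (x₁ : A₁ ⟶ B₁) (y₁ : B₁ ⟶ Z) (x₂ : A₂ ⟶ B₂) (y₂ : B₂ ⟶ Z)
    (w₁ : x₁ ≫ y₁ = 0) (w₂ : x₂ ≫ y₂ = 0)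
    (h₁ : (ShortComplex.mk x₁ y₁ w₁).ShortExact)
    (h₂ : (ShortComplex.mk x₂ y₂ w₂).ShortExact) :
    ∃ (m₁ : A₁ ⟶ pullback y₁ y₂) (m₂ : A₂ ⟶ pullback y₁ y₂)
      (_ : m₁ ≫ pullback.fst y₁ y₂ = x₁) (_ : m₂ ≫ pullback.snd y₁ y₂ = x₂)
      (wr : m₁ ≫ pullback.snd y₁ y₂ = 0) (wc : m₂ ≫ pullback.fst y₁ y₂ = 0)
      (hr : (ShortComplex.mk m₁ (pullback.snd y₁ y₂) wr).ShortExact)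
      (hc : (ShortComplex.mk m₂ (pullback.fst y₁ y₂) wc).ShortExact),
      hr.extClass = (Ext.mk₀ y₂).comp h₁.extClass (zero_add 1) ∧
      hc.extClass = (Ext.mk₀ y₁).comp h₂.extClass (zero_add 1) ∧
      h₁.extClass.comp (Ext.mk₀ m₁) (add_zero 1) +
        h₂.extClass.comp (Ext.mk₀ m₂) (add_zero 1) = 0 := by
  haveI : Mono x₁ := h₁.mono_f
  haveI : Mono x₂ := h₂.mono_f
  haveI : Epi y₁ := h₁.epi_g
  haveI : Epi y₂ := h₂.epi_g
  obtain ⟨m₁, hm₁fst, hm₁snd⟩ : ∃ m₁ : A₁ ⟶ pullback y₁ y₂,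
      m₁ ≫ pullback.fst y₁ y₂ = x₁ ∧ m₁ ≫ pullback.snd y₁ y₂ = 0 :=
    ⟨pullback.lift x₁ 0 (by rw [w₁, zero_comp]), pullback.lift_fst _ _ _,
      pullback.lift_snd _ _ _⟩
  obtain ⟨m₂, hm₂fst, hm₂snd⟩ : ∃ m₂ : A₂ ⟶ pullback y₁ y₂,
      m₂ ≫ pullback.fst y₁ y₂ = 0 ∧ m₂ ≫ pullback.snd y₁ y₂ = x₂ :=
    ⟨pullback.lift 0 x₂ (by rw [w₂, zero_comp]), pullback.lift_fst _ _ _,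
      pullback.lift_snd _ _ _⟩
  haveI : Mono m₁ := mono_of_mono_fac hm₁fst
  haveI : Mono m₂ := mono_of_mono_fac hm₂snd
  -- the middle row
  have krIsKernel : IsLimit (KernelFork.ofι m₁ hm₁snd) :=
    KernelFork.IsLimit.ofι' m₁ hm₁snd (fun {W} k hk => by
      have hk' : (k ≫ pullback.fst y₁ y₂) ≫ y₁ = 0 := by
        rw [Category.assoc, pullback.condition, ← Category.assoc, hk, zero_comp]
      obtain ⟨l, hl⟩ := KernelFork.IsLimit.lift' h₁.fIsKernel (k ≫ pullback.fst y₁ y₂) hk'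
      dsimp at hl
      exact ⟨l, by
        apply pullback.hom_ext
        · rw [Category.assoc, hm₁fst, hl]
        · rw [Category.assoc, hm₁snd, comp_zero, hk]⟩)
  have hr : (ShortComplex.mk m₁ (pullback.snd y₁ y₂) hm₁snd).ShortExact :=
    { exact := ShortComplex.exact_of_f_is_kernel _ krIsKernel }
  -- the middle column
  have kcIsKernel : IsLimit (KernelFork.ofι m₂ hm₂fst) :=
    KernelFork.IsLimit.ofι' m₂ hm₂fst (fun {W} k hk => by
      have hk' : (k ≫ pullback.snd y₁ y₂) ≫ y₂ = 0 := by
        rw [Category.assoc, ← pullback.condition, ← Category.assoc, hk, zero_comp]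
      obtain ⟨l, hl⟩ := KernelFork.IsLimit.lift' h₂.fIsKernel (k ≫ pullback.snd y₁ y₂) hk'
      dsimp at hl
      exact ⟨l, by
        apply pullback.hom_ext
        · rw [Category.assoc, hm₂fst, comp_zero, hk]
        · rw [Category.assoc, hm₂snd, hl]⟩)
  have hc : (ShortComplex.mk m₂ (pullback.fst y₁ y₂) hm₂fst).ShortExact :=
    { exact := ShortComplex.exact_of_f_is_kernel _ kcIsKernel }
  -- identification of the extension classes of the row and column
  have hrow : hr.extClass = (Ext.mk₀ y₂).comp h₁.extClass (zero_add 1) := by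
    have := extClass_naturality_s9 (S₁ := ShortComplex.mk m₁ (pullback.snd y₁ y₂) hm₁snd)
      (S₂ := ShortComplex.mk x₁ y₁ w₁)
      ⟨𝟙 A₁, pullback.fst y₁ y₂, y₂, by simpa using hm₁fst.symm, pullback.condition⟩ hr h₁
    simpa using this.symm
  have hcol : hc.extClass = (Ext.mk₀ y₁).comp h₂.extClass (zero_add 1) := by
    have := extClass_naturality_s9 (S₁ := ShortComplex.mk m₂ (pullback.fst y₁ y₂) hm₂fst)
      (S₂ := ShortComplex.mk x₂ y₂ w₂)
      ⟨𝟙 A₂, pullback.snd y₁ y₂, y₁, by simpa using hm₂snd.symm, pullback.condition.symm⟩ hc h₂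
    simpa using this.symm
  -- the diagonal short exact sequence `0 ⟶ M ⟶ B₁ ⊞ B₂ ⟶ Z ⟶ 0`
  have wT : biprod.lift (pullback.fst y₁ y₂) (pullback.snd y₁ y₂) ≫ biprod.desc y₁ (-y₂) = 0 := by
    simp [pullback.condition]
  haveI : Mono (biprod.lift (pullback.fst y₁ y₂) (pullback.snd y₁ y₂)) := ⟨fun {W} a b hab => by
    apply pullback.hom_ext
    · have := hab =≫ biprod.fst; simpa using this
    · have := hab =≫ biprod.snd; simpa using this⟩
  haveI : Epi (biprod.desc y₁ (-y₂)) := epi_of_epi_fac (show biprod.inl ≫ _ = y₁ by simp)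
  have kT : IsLimit (KernelFork.ofι _ wT) :=
    KernelFork.IsLimit.ofι' _ wT (fun {W} k hk => by
      have hk2 : biprod.lift (k ≫ biprod.fst) (k ≫ biprod.snd) ≫ biprod.desc y₁ (-y₂) = 0 := by
        rwa [show biprod.lift (k ≫ biprod.fst) (k ≫ biprod.snd) = k from
          by apply biprod.hom_ext <;> simp]
      simp only [biprod.lift_desc, Preadditive.comp_neg] at hk2
      have hcond : (k ≫ biprod.fst) ≫ y₁ = (k ≫ biprod.snd) ≫ y₂ := add_neg_eq_zero.mp hk2
      exact ⟨pullback.lift (k ≫ biprod.fst) (k ≫ biprod.snd) hcond, by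
        apply biprod.hom_ext <;> simp [pullback.lift_fst, pullback.lift_snd]⟩)
  have hT : (ShortComplex.mk _ _ wT).ShortExact :=
    { exact := ShortComplex.exact_of_f_is_kernel _ kT }
  have nat₁ := extClass_naturality_s9 (S₁ := ShortComplex.mk x₁ y₁ w₁)
    (S₂ := ShortComplex.mk _ _ wT)
    ⟨m₁, biprod.inl, 𝟙 Z,
      by apply biprod.hom_ext <;> simp [hm₁fst, hm₁snd],
      by simp⟩ h₁ hT
  have nat₂ := extClass_naturality_s9 (S₁ := ShortComplex.mk x₂ y₂ w₂)
    (S₂ := ShortComplex.mk _ _ wT)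
    ⟨m₂, biprod.inr, -𝟙 Z,
      by apply biprod.hom_ext <;> simp [hm₂fst, hm₂snd],
      by simp⟩ h₂ hT
  dsimp at nat₁ nat₂
  rw [Ext.mk₀_id_comp] at nat₁
  rw [mk₀_neg, Ext.neg_comp, Ext.mk₀_id_comp] at nat₂
  refine ⟨m₁, m₂, hm₁fst, hm₂snd, hm₁snd, hm₂fst, hr, hc, hrow, hcol, ?_⟩
  rw [← nat₁, ← nat₂, add_neg_cancel]
end

section
/- Let C be an abelian category and F an additive subfunctor of Ext^1 with the property that F-deflations are closed under composition. Given F-deflations g: B ↠ C with kernel class δ ∈ F(C,A) and e: E ↠ B with kernel class η ∈ F(B,D), the composite deflation g∘e: E ↠ C has kernel K fitting into an F-exact sequence 0 → D → K → A → 0 whose class is the pullback η·a, where a: A → B is the kernel inclusion of g. -/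
open CategoryTheory CategoryTheory.Limits CategoryTheory.Abelian

universe w v u

variable {C : Type u} [Category.{v} C] [Abelian C] [HasExt.{w} C]

section Aux

open Category

namespace DerivedCategory
variable {C : Type u} [Category.{v} C] [Abelian C] [HasDerivedCategory.{w} C]

lemma map_descShortComplex {S₁ S₂ : ShortComplex (CochainComplex C ℤ)} (φ : S₁ ⟶ S₂) :
    CochainComplex.mappingCone.map S₁.f S₂.f φ.τ₁ φ.τ₂ φ.comm₁₂.symm ≫
      CochainComplex.mappingCone.descShortComplex S₂ =
    CochainComplex.mappingCone.descShortComplex S₁ ≫ φ.τ₃ := by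
  ext n
  simp only [CochainComplex.mappingCone.ext_from_iff _ (n+1) n rfl,
    HomologicalComplex.comp_f]
  constructor
  · simp [CochainComplex.mappingCone.map, CochainComplex.mappingCone.descShortComplex]
  · simp only [CochainComplex.mappingCone.inr_f_descShortComplex_f,
      CochainComplex.mappingCone.map, CochainComplex.mappingCone.inr_f_desc_f_assoc,
      CochainComplex.mappingCone.inr_f_desc_f]
    have := HomologicalComplex.congr_hom φ.comm₂₃ n
    simpa using this

lemma triangleOfSESδ_naturality' {S₁ S₂ : ShortComplex (CochainComplex C ℤ)} (φ : S₁ ⟶ S₂)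
    (h₁ : S₁.ShortExact) (h₂ : S₂.ShortExact) :
    Q.map φ.τ₃ ≫ triangleOfSESδ h₂ = triangleOfSESδ h₁ ≫ (Q.map φ.τ₁)⟦(1 : ℤ)⟧' := by
  exact (triangleOfSESδ_naturality h₁ h₂ φ).symm

end DerivedCategory

namespace CategoryTheory.ShortComplex.ShortExact

variable {C : Type u} [Category.{v} C] [Abelian C]

/-- map of short complexes under single functor -/
@[simps]
def mapHom {S₁ S₂ : ShortComplex C} (φ : S₁ ⟶ S₂) (F : C ⥤ CochainComplex C ℤ)
    [F.PreservesZeroMorphisms] : S₁.map F ⟶ S₂.map F where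
  τ₁ := F.map φ.τ₁
  τ₂ := F.map φ.τ₂
  τ₃ := F.map φ.τ₃
  comm₁₂ := by dsimp [ShortComplex.map]; rw [← F.map_comp, ← F.map_comp, φ.comm₁₂]
  comm₂₃ := by dsimp [ShortComplex.map]; rw [← F.map_comp, ← F.map_comp, φ.comm₂₃]

lemma singleδ_naturality [HasDerivedCategory.{w} C] {S₁ S₂ : ShortComplex C} (φ : S₁ ⟶ S₂)
    (h₁ : S₁.ShortExact) (h₂ : S₂.ShortExact) :
    (DerivedCategory.singleFunctor C 0).map φ.τ₃ ≫ h₂.singleδ =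
      h₁.singleδ ≫ ((DerivedCategory.singleFunctor C 0).map φ.τ₁)⟦(1 : ℤ)⟧' := by
  exact ((singleTriangle.map h₁ h₂ φ).comm₃).symm

end CategoryTheory.ShortComplex.ShortExact

namespace CategoryTheory.ShortComplex.ShortExact

variable {C : Type u} [Category.{v} C] [Abelian C] [HasExt.{w} C]

lemma extClass_naturality' {S₁ S₂ : ShortComplex C} (φ : S₁ ⟶ S₂)
    (h₁ : S₁.ShortExact) (h₂ : S₂.ShortExact) :
    (Abelian.Ext.mk₀ φ.τ₃).comp h₂.extClass (zero_add 1) =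
      h₁.extClass.comp (Abelian.Ext.mk₀ φ.τ₁) (add_zero 1) := by
  letI := HasDerivedCategory.standard C
  ext
  simp only [Abelian.Ext.comp_hom, Abelian.Ext.mk₀_hom, extClass_hom,
    ShiftedHom.mk₀_comp, ShiftedHom.comp_mk₀]
  exact singleδ_naturality φ h₁ h₂

end CategoryTheory.ShortComplex.ShortExact

open CategoryTheory CategoryTheory.Limits CategoryTheory.Abelian

variable {C : Type u} [Category.{v} C] [Abelian C] [HasExt.{w} C]

theorem kernel_sequence_of_composite_deflation'
    (F : ∀ Z A : C, Set (Ext Z A 1))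
    {A B Z D E : C}
    (a : A ⟶ B) (g : B ⟶ Z) (wg : a ≫ g = 0)
    (hg : (ShortComplex.mk a g wg).ShortExact)
    (d : D ⟶ E) (e : E ⟶ B) (we : d ≫ e = 0)
    (he : (ShortComplex.mk d e we).ShortExact)
    (heF : he.extClass ∈ F B D)
    (hpull : ∀ (Z Z' A : C) (c : Z' ⟶ Z), ∀ δ ∈ F Z A, (Ext.mk₀ c).comp δ (zero_add 1) ∈ F Z' A) :
    ∃ (K : C) (kk : K ⟶ E) (wk : kk ≫ (e ≫ g) = 0)
      (_hk : (ShortComplex.mk kk (e ≫ g) wk).ShortExact)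
      (u : D ⟶ K) (p : K ⟶ A) (wu : u ≫ p = 0)
      (hu : (ShortComplex.mk u p wu).ShortExact),
      u ≫ kk = d ∧ kk ≫ e = p ≫ a ∧
      hu.extClass = (Ext.mk₀ a).comp he.extClass (zero_add 1) ∧
      hu.extClass ∈ F A D := by
  haveI : Mono a := hg.mono_f
  haveI : Mono d := he.mono_f
  haveI : Epi g := hg.epi_g
  haveI : Epi e := he.epi_g
  have hKa : IsLimit (KernelFork.ofι a wg) := hg.fIsKernel
  have hKd : IsLimit (KernelFork.ofι d we) := he.fIsKernel
  set kk : pullback a e ⟶ E := pullback.snd a e with hkk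
  have wk : kk ≫ (e ≫ g) = 0 := by rw [hkk, ← pullback.condition_assoc, wg, comp_zero]
  set u : D ⟶ pullback a e := pullback.lift 0 d (by rw [zero_comp, we]) with hudef
  set p : pullback a e ⟶ A := pullback.fst a e with hp
  have wu : u ≫ p = 0 := by simp [hudef, hp, pullback.lift_fst]
  have hud : u ≫ kk = d := by simp [hudef, hkk, pullback.lift_snd]
  haveI : Mono kk := by rw [hkk]; infer_instance
  -- kk is the kernel of e ≫ g
  have hk : (ShortComplex.mk kk (e ≫ g) wk).ShortExact := by
    have key : ∀ {W : C} (k : W ⟶ E), k ≫ (e ≫ g) = 0 → ∃ l, l ≫ kk = k := by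
      intro W k hkw
      obtain ⟨l, hl⟩ := KernelFork.IsLimit.lift' hKa (k ≫ e)
        (by rw [Category.assoc]; exact hkw)
      simp only [Fork.ι_ofι] at hl
      refine ⟨pullback.lift l k hl, ?_⟩
      rw [hkk]; exact pullback.lift_snd _ _ _
    refine { exact := ShortComplex.exact_of_f_is_kernel _ ?_ }
    exact KernelFork.IsLimit.ofι _ _ (fun {W} k hkw => (key k hkw).choose)
      (fun {W} k hkw => (key k hkw).choose_spec)
      (fun {W} k hkw m hm => by
        rw [← cancel_mono kk, (key k hkw).choose_spec]; exact hm)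
  -- u is the kernel of p
  have hu : (ShortComplex.mk u p wu).ShortExact := by
    haveI : Mono u := by
      have : Mono (u ≫ kk) := by rw [hud]; infer_instance
      exact mono_of_mono u kk
    haveI : Epi p := by rw [hp]; infer_instance
    have key : ∀ {W : C} (k : W ⟶ pullback a e), k ≫ p = 0 → ∃ l, l ≫ u = k := by
      intro W k hkw
      obtain ⟨l, hl⟩ := KernelFork.IsLimit.lift' hKd (k ≫ kk)
        (by rw [Category.assoc, hkk, ← pullback.condition, ← hp, ← Category.assoc, hkw,
          zero_comp])
      simp only [Fork.ι_ofι] at hl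
      refine ⟨l, pullback.hom_ext ?_ ?_⟩
      · rw [← hp, Category.assoc]
        change l ≫ u ≫ p = k ≫ p
        rw [wu, comp_zero, hkw]
      · rw [← hkk, Category.assoc]
        change l ≫ u ≫ kk = k ≫ kk
        rw [hud, hl]
    refine { exact := ShortComplex.exact_of_f_is_kernel _ ?_ }
    exact KernelFork.IsLimit.ofι _ _ (fun {W} k hkw => (key k hkw).choose)
      (fun {W} k hkw => (key k hkw).choose_spec)
      (fun {W} k hkw m hm => by
        rw [← cancel_mono u, (key k hkw).choose_spec]; exact hm)
  -- the comparison of extension classes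
  let φ : ShortComplex.mk u p wu ⟶ ShortComplex.mk d e we :=
    { τ₁ := 𝟙 D
      τ₂ := kk
      τ₃ := a
      comm₁₂ := by dsimp; rw [Category.id_comp, hud]
      comm₂₃ := by dsimp; rw [hkk, hp, pullback.condition] }
  have h3 := ShortComplex.ShortExact.extClass_naturality' φ hu he
  dsimp only [φ] at h3
  rw [Ext.comp_mk₀_id] at h3
  exact ⟨pullback a e, kk, wk, hk, u, p, wu, hu, hud, by rw [hkk, hp, pullback.condition],
    h3.symm, by rw [← h3]; exact hpull B A D a he.extClass heF⟩

end Aux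

/-- Given composable `F`-deflations `e : E ⟶ B` (with kernel `d : D ⟶ E`, class `η`)
and `g : B ⟶ Z` (with kernel `a : A ⟶ B`, class `δ`), where `F`-deflations compose,
the kernel `K` of `g ∘ e` fits into an `F`-exact short exact sequence
`0 → D → K → A → 0` whose class is the pullback `η · a`. -/
theorem kernel_sequence_of_composite_deflation
    (F : ∀ Z A : C, Set (Ext Z A 1)) (hF : IsAddSubfunctor F)
    (hclosed : DeflationsClosed F)
    {A B Z D E : C}
    (a : A ⟶ B) (g : B ⟶ Z) (wg : a ≫ g = 0)
    (hg : (ShortComplex.mk a g wg).ShortExact)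
    (hgF : hg.extClass ∈ F Z A)
    (d : D ⟶ E) (e : E ⟶ B) (we : d ≫ e = 0)
    (he : (ShortComplex.mk d e we).ShortExact)
    (heF : he.extClass ∈ F B D) :
    ∃ (K : C) (kk : K ⟶ E) (wk : kk ≫ (e ≫ g) = 0)
      (_hk : (ShortComplex.mk kk (e ≫ g) wk).ShortExact)
      (u : D ⟶ K) (p : K ⟶ A) (wu : u ≫ p = 0)
      (hu : (ShortComplex.mk u p wu).ShortExact),
      u ≫ kk = d ∧ kk ≫ e = p ≫ a ∧
      hu.extClass = (Ext.mk₀ a).comp he.extClass (zero_add 1) ∧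
      hu.extClass ∈ F A D := by
  exact kernel_sequence_of_composite_deflation' F a g wg hg d e we he heF hF.pull
end
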